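/- Let N ≥ 1, σ² > 0, and let G be an N×N real matrix with G + Gᵀ ≠ (2/N)·tr(G)·I_N. Then the symmetric 2×2 real matrix [[ tr(G²) + tr(GᵀG), σ^{-2}·tr(G) ], [ σ^{-2}·tr(G), N/(2σ⁴) ]] is positive definite. -/

import Mathlib

open Matrix BigOperators

/-- If `G + Gᵀ ≠ (2/N) tr(G) I`, then the `2 × 2` information block
`[[tr(G²) + tr(GᵀG), σ⁻² tr G], [σ⁻² tr G, N/(2σ⁴)]]` is positive definite
(here `σ2` denotes `σ²`). -/
theorem information_block_posDef (N : ℕ) (hN : 1 ≤ N) (σ2 : ℝ) (hσ : 0 < σ2)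
    (G : Matrix (Fin N) (Fin N) ℝ)
    (hG : G + Gᵀ ≠ ((2 / N : ℝ) * G.trace) • (1 : Matrix (Fin N) (Fin N) ℝ)) :
    Matrix.PosDef
      !![(G * G).trace + (Gᵀ * G).trace, σ2⁻¹ * G.trace;
         σ2⁻¹ * G.trace, (N : ℝ) / (2 * σ2 ^ 2)] := by
  have hN0 : (0:ℝ) < N := by exact_mod_cast hN
  set c : ℝ := (2 / N : ℝ) * G.trace with hc
  set A := G + Gᵀ - c • (1 : Matrix (Fin N) (Fin N) ℝ) with hAdef
  have hA : A ≠ 0 := sub_ne_zero.mpr hG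
  have hAsymm : Aᵀ = A := by
    simp [hAdef, transpose_add]
    abel
  have hAsym : ∀ i j, A j i = A i j := by
    intro i j
    have := congrFun (congrFun hAsymm i) j
    simpa [Matrix.transpose_apply] using this
  have hpos : 0 < (A * A).trace := by
    obtain ⟨i, j, hij⟩ : ∃ i j, A i j ≠ 0 := by
      by_contra h; push_neg at h; exact hA (by ext i j; simp [h])
    have htr : (A * A).trace = ∑ i, ∑ j, (A i j)^2 := by
      simp only [Matrix.trace, Matrix.mul_apply, Matrix.diag]
      refine Finset.sum_congr rfl fun i _ => Finset.sum_congr rfl fun j _ => ?_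
      rw [hAsym i j]; ring
    rw [htr]
    have : 0 < ∑ j', (A i j')^2 := by
      apply Finset.sum_pos' (fun j' _ => sq_nonneg _)
      exact ⟨j, Finset.mem_univ j, by positivity⟩
    refine Finset.sum_pos' (fun i' _ => Finset.sum_nonneg fun j' _ => sq_nonneg _) ⟨i, Finset.mem_univ i, this⟩
  have htrA : (A * A).trace
      = 2 * ((G * G).trace + (Gᵀ * G).trace) - 4 * G.trace ^ 2 / N := by
    have h1 : (Gᵀ * Gᵀ).trace = (G * G).trace := by
      rw [← Matrix.transpose_mul, Matrix.trace_transpose]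
    have h2 : (G * Gᵀ).trace = (Gᵀ * G).trace := Matrix.trace_mul_comm G Gᵀ
    have h3 : Gᵀ.trace = G.trace := Matrix.trace_transpose G
    simp only [hAdef, Matrix.sub_mul, Matrix.mul_sub, Matrix.add_mul, Matrix.mul_add,
      Matrix.smul_mul, Matrix.mul_smul, Matrix.one_mul, Matrix.mul_one,
      Matrix.trace_sub, Matrix.trace_add, Matrix.trace_smul, Matrix.trace_one, Fintype.card_fin,
      smul_eq_mul, h1, h2, h3]
    rw [hc]
    field_simp
    ring
  have key : 2 * G.trace ^ 2 / N < (G * G).trace + (Gᵀ * G).trace := by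
    rw [htrA, sub_pos, div_lt_iff₀ hN0] at hpos
    rw [div_lt_iff₀ hN0]
    linarith
  refine Matrix.PosDef.of_dotProduct_mulVec_pos ?_ ?_
  · ext i j
    fin_cases i <;> fin_cases j <;>
      simp [Matrix.conjTranspose_apply]
  · intro x hx
    have hx' : x 0 ≠ 0 ∨ x 1 ≠ 0 := by
      by_contra h; push_neg at h
      exact hx (by ext i; fin_cases i <;> simp [h.1, h.2])
    simp [dotProduct, Matrix.mulVec, Fin.sum_univ_two]
    set a := (G * G).trace + (Gᵀ * G).trace with hadef
    set t := G.trace with htdef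
    have h2 : 2 * t ^ 2 < a * N := by
      rw [div_lt_iff₀ hN0] at key; linarith
    have ha : 0 < a := by nlinarith [sq_nonneg t]
    have hadb : 0 < a * ((N:ℝ)/(2*σ2^2)) - (σ2⁻¹*t)^2 := by
      rw [show a * ((N:ℝ)/(2*σ2^2)) - (σ2⁻¹*t)^2 = (a*N - 2*t^2)/(2*σ2^2) by
        field_simp]
      exact div_pos (by linarith) (by positivity)
    by_cases h1 : x 1 = 0
    · have h0 : x 0 ≠ 0 := hx'.resolve_right (by simp [h1])
      have : 0 < x 0 ^ 2 := by positivity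
      simp only [h1]
      nlinarith
    · have hx1 : 0 < x 1 ^ 2 := by positivity
      nlinarith [sq_nonneg (a * x 0 + (σ2⁻¹*t) * x 1), mul_pos hadb hx1, ha]
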